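/- Let V be a real vector space, let v_1, …, v_d ∈ V be linearly independent, and for 0 ≤ i ≤ d set σ^i = S(v_1, …, v_i) and τ^{d−i} = S(v_{i+1}, …, v_d), where S(w_1, …, w_k) = { x_1 w_1 + ⋯ + x_k w_k : 1 ≥ x_1 ≥ ⋯ ≥ x_k ≥ 0 }. Fix a, b > 0 and define A_i = a σ^i + b τ^{d−i} + b(v_1 + ⋯ + v_i) for i ≥ 0 (Minkowski sums and translation). Then (a+b) σ^d = A_0 ∪ A_1 ∪ ⋯ ∪ A_d. -/

import Mathlib

open scoped Pointwise

/-- `simplexS w` is the simplex `S(w_1, …, w_k) =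
{ x_1 w_1 + ⋯ + x_k w_k : 1 ≥ x_1 ≥ ⋯ ≥ x_k ≥ 0 }`. -/
def simplexS {V : Type*} [AddCommGroup V] [Module ℝ V] {k : ℕ} (w : Fin k → V) : Set V :=
  {y | ∃ x : Fin k → ℝ, (∀ i, 0 ≤ x i) ∧ (∀ i, x i ≤ 1) ∧
    (∀ i j : Fin k, i ≤ j → x j ≤ x i) ∧ y = ∑ i, x i • w i}

-- reindexing lemmas
lemma sum_fin_lt {M : Type*} [AddCommMonoid M] {d i : ℕ} (hi : i ≤ d) (g : Fin d → M) :
    ∑ t : Fin i, g (Fin.castLE hi t)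
      = ∑ j ∈ Finset.univ.filter (fun j : Fin d => j.1 < i), g j := by
  refine Finset.sum_bij' (fun t _ => Fin.castLE hi t)
    (fun j hj => ⟨j.1, by simpa using hj⟩) ?_ ?_ ?_ ?_ ?_ <;>
    simp [Fin.castLE, Fin.lt_iff_val_lt_val, Fin.is_lt]

lemma sum_fin_ge {M : Type*} [AddCommMonoid M] {d i : ℕ} (hi : i ≤ d) (g : Fin d → M) :
    ∑ t : Fin (d - i), g ⟨i + t.1, by omega⟩
      = ∑ j ∈ Finset.univ.filter (fun j : Fin d => ¬ j.1 < i), g j := by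
  refine Finset.sum_bij' (fun (t : Fin (d - i)) _ => (⟨i + t.1, by omega⟩ : Fin d))
    (fun j hj => ⟨j.1 - i, by have := j.2; have : i ≤ j.1 := (by simpa using hj); omega⟩)
    ?_ ?_ ?_ ?_ ?_
  · intro t _; simp
  · intro j hj; simp
  · intro t _; ext; simp
  · intro j hj; have : i ≤ j.1 := (by simpa using hj)
    ext; simp; omega
  · intro t _; rfl

lemma sum_decomp {V : Type*} [AddCommGroup V] [Module ℝ V] {d : ℕ}
    (v : Fin d → V) {i : ℕ} (hi : i ≤ d) (a b : ℝ)
    (x' yy' z : Fin d → ℝ)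
    (hz1 : ∀ j : Fin d, j.1 < i → z j = a * x' j + b)
    (hz2 : ∀ j : Fin d, i ≤ j.1 → z j = b * yy' j) :
    a • (∑ t : Fin i, x' (Fin.castLE hi t) • v (Fin.castLE hi t))
      + b • (∑ t : Fin (d - i), yy' ⟨i + t.1, by omega⟩ • v ⟨i + t.1, by omega⟩)
      + b • ∑ j ∈ Finset.univ.filter (fun j : Fin d => j.1 < i), v j
    = ∑ j : Fin d, z j • v j := by
  rw [← Finset.sum_filter_add_sum_filter_not Finset.univ (fun j : Fin d => j.1 < i)]
  rw [sum_fin_lt hi (fun j => x' j • v j), sum_fin_ge hi (fun j => yy' j • v j)]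
  have e1 : ∑ j ∈ Finset.univ.filter (fun j : Fin d => j.1 < i), z j • v j
      = a • ∑ j ∈ Finset.univ.filter (fun j : Fin d => j.1 < i), x' j • v j
        + b • ∑ j ∈ Finset.univ.filter (fun j : Fin d => j.1 < i), v j := by
    rw [Finset.smul_sum, Finset.smul_sum, ← Finset.sum_add_distrib]
    refine Finset.sum_congr rfl fun j hj => ?_
    have hj' : j.1 < i := by simpa using hj
    rw [hz1 j hj', add_smul, smul_smul]
  have e2 : ∑ j ∈ Finset.univ.filter (fun j : Fin d => ¬ j.1 < i), z j • v j
      = b • ∑ j ∈ Finset.univ.filter (fun j : Fin d => ¬ j.1 < i), yy' j • v j := by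
    rw [Finset.smul_sum]
    refine Finset.sum_congr rfl fun j hj => ?_
    have hj' : i ≤ j.1 := by simpa using hj
    rw [hz2 j hj', smul_smul]
  rw [e1, e2]; abel

theorem stmt12 {V : Type*} [AddCommGroup V] [Module ℝ V] {d : ℕ}
    (v : Fin d → V) (hv : LinearIndependent ℝ v) (a b : ℝ) (ha : 0 < a) (hb : 0 < b)
    -- `σ i = S(v_1, …, v_i)`:
    (σ : Fin (d + 1) → Set V)
    (hσ : ∀ i, σ i = simplexS (fun t : Fin i.1 => v (Fin.castLE i.is_le t)))
    -- `τ i = S(v_{i+1}, …, v_d)`: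
    (τ : Fin (d + 1) → Set V)
    (hτ : ∀ i, τ i = simplexS (fun t : Fin (d - i.1) => v ⟨i.1 + t.1, by omega⟩))
    -- `A i = a σ^i + b τ^{d-i} + b(v_1 + ⋯ + v_i)`:
    (A : Fin (d + 1) → Set V)
    (hA : ∀ i, A i = a • σ i + b • τ i
      + ({b • ∑ j ∈ Finset.univ.filter (fun j : Fin d => (j : ℕ) < i.1), v j} : Set V)) :
    (a + b) • simplexS v = ⋃ i : Fin (d + 1), A i := by
  have hab : (0:ℝ) < a + b := by linarith
  have ha' : a ≠ 0 := ha.ne'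
  have hb' : b ≠ 0 := hb.ne'
  have hab' : a + b ≠ 0 := hab.ne'
  ext y
  simp only [Set.mem_iUnion]
  constructor
  · rintro ⟨w, ⟨x, hx0, hx1, hxm, rfl⟩, rfl⟩
    set z : Fin d → ℝ := fun j => (a + b) * x j with hzdef
    have z0 : ∀ j, 0 ≤ z j := fun j => mul_nonneg hab.le (hx0 j)
    have zub : ∀ j, z j ≤ a + b := fun j => by
      have h1 := hx1 j
      have : z j = (a + b) * x j := rfl
      nlinarith
    have zmono : ∀ j k : Fin d, j ≤ k → z k ≤ z j := fun j k h =>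
      mul_le_mul_of_nonneg_left (hxm j k h) hab.le
    set S : Set ℕ := {n | n = d ∨ ∃ h : n < d, z ⟨n, h⟩ < b} with hSdef
    have hdS : d ∈ S := Or.inl rfl
    set i : ℕ := sInf S with hidef
    have hid : i ≤ d := Nat.sInf_le hdS
    have hmem : i ∈ S := Nat.sInf_mem ⟨d, hdS⟩
    have hlt : ∀ j : Fin d, j.1 < i → b ≤ z j := by
      intro j hj
      have hnot : j.1 ∉ S := Nat.notMem_of_lt_sInf hj
      simp only [hSdef, Set.mem_setOf_eq, not_or, not_exists, not_lt] at hnot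
      have := hnot.2 j.2
      simpa using this
    have hge : ∀ j : Fin d, i ≤ j.1 → z j ≤ b := by
      intro j hj
      rcases hmem with h | ⟨h, hzb⟩
      · exfalso; have := j.2; omega
      · have : z j ≤ z ⟨i, h⟩ := zmono ⟨i, h⟩ j hj
        linarith
    refine ⟨⟨i, by omega⟩, ?_⟩
    rw [hA, hσ, hτ]
    simp only [Fin.val_mk]
    set x' : Fin d → ℝ := fun j => (z j - b) / a with hx'def
    set yy' : Fin d → ℝ := fun j => z j / b with hyy'def
    have key := sum_decomp v hid a b x' yy' z
      (fun j hj => by rw [hx'def]; field_simp; ring)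
      (fun j hj => by rw [hyy'def]; field_simp)
    have hy : (a + b) • ∑ j, x j • v j = ∑ j : Fin d, z j • v j := by
      rw [Finset.smul_sum]
      exact Finset.sum_congr rfl fun j _ => smul_smul _ _ _
    show (a + b) • ∑ j : Fin d, x j • v j ∈ _
    rw [hy, ← key]
    refine Set.add_mem_add (Set.add_mem_add (Set.smul_mem_smul_set ?_)
      (Set.smul_mem_smul_set ?_)) rfl
    · refine ⟨fun t => x' (Fin.castLE hid t), ?_, ?_, ?_, rfl⟩
      · intro t
        have hb' := hlt (Fin.castLE hid t) t.2
        have : 0 ≤ z (Fin.castLE hid t) - b := by linarith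
        exact div_nonneg this ha.le
      · intro t
        have := zub (Fin.castLE hid t)
        rw [hx'def, div_le_one ha]; linarith
      · intro t s hts
        have hz := zmono (Fin.castLE hid t) (Fin.castLE hid s)
          hts
        rw [hx'def]
        exact (div_le_div_iff_of_pos_right ha).mpr (by linarith)
    · refine ⟨fun t => yy' ⟨i + t.1, by omega⟩, ?_, ?_, ?_, rfl⟩
      · intro t; exact div_nonneg (z0 _) hb.le
      · intro t
        have := hge ⟨i + t.1, by omega⟩ (by simp)
        rw [hyy'def, div_le_one hb]; linarith
      · intro t s hts
        have hts' : t.1 ≤ s.1 := Fin.le_def.mp hts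
        have hz : z ⟨i + s.1, by omega⟩ ≤ z ⟨i + t.1, by omega⟩ := by
          exact zmono _ _ (Fin.mk_le_mk.mpr (by omega))
        rw [hyy'def]
        exact (div_le_div_iff_of_pos_right hb).mpr hz
  · rintro ⟨I, hI⟩
    rw [hA, hσ, hτ] at hI
    obtain ⟨u, hu, w, hw, rfl⟩ := Set.mem_add.mp hI
    obtain ⟨p, hp, q, hq, rfl⟩ := Set.mem_add.mp hu
    obtain ⟨p', ⟨xc, hxc0, hxc1, hxcm, rfl⟩, rfl⟩ := Set.mem_smul_set.mp hp
    obtain ⟨q', ⟨yc, hyc0, hyc1, hycm, rfl⟩, rfl⟩ := Set.mem_smul_set.mp hq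
    rw [Set.mem_singleton_iff] at hw
    subst hw
    set x' : Fin d → ℝ := fun j => if h : j.1 < I.1 then xc ⟨j.1, h⟩ else 0 with hx'def
    set yy' : Fin d → ℝ := fun j =>
      if h : j.1 < I.1 then 0 else yc ⟨j.1 - I.1, by have := j.2; omega⟩ with hyy'def
    set z : Fin d → ℝ := fun j => if j.1 < I.1 then a * x' j + b else b * yy' j with hzdef
    have hz1 : ∀ j : Fin d, j.1 < I.1 → z j = a * x' j + b := fun j hj => if_pos hj
    have hz2 : ∀ j : Fin d, I.1 ≤ j.1 → z j = b * yy' j := fun j hj =>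
      if_neg (not_lt.mpr hj)
    have key := sum_decomp v I.is_le a b x' yy' z hz1 hz2
    have z0 : ∀ j, 0 ≤ z j := by
      intro j
      by_cases h : j.1 < I.1
      · simp only [hzdef, hx'def, if_pos h, dif_pos h]
        have := hxc0 ⟨j.1, h⟩; nlinarith
      · simp only [hzdef, hyy'def, if_neg h, dif_neg h]
        have := hyc0 ⟨j.1 - I.1, by have := j.2; omega⟩; nlinarith
    have zub : ∀ j, z j ≤ a + b := by
      intro j
      by_cases h : j.1 < I.1
      · simp only [hzdef, hx'def, if_pos h, dif_pos h]
        have := hxc1 ⟨j.1, h⟩; nlinarith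
      · simp only [hzdef, hyy'def, if_neg h, dif_neg h]
        have := hyc1 ⟨j.1 - I.1, by have := j.2; omega⟩; nlinarith
    have zmono : ∀ j k : Fin d, j ≤ k → z k ≤ z j := by
      intro j k hjk
      have hjk' : j.1 ≤ k.1 := Fin.le_def.mp hjk
      by_cases h1 : j.1 < I.1 <;> by_cases h2 : k.1 < I.1
      · simp only [hzdef, hx'def, if_pos h1, if_pos h2, dif_pos h1, dif_pos h2]
        have := hxcm ⟨j.1, h1⟩ ⟨k.1, h2⟩ (Fin.mk_le_mk.mpr hjk')
        nlinarith
      · simp only [hzdef, hx'def, hyy'def, if_pos h1, if_neg h2, dif_pos h1, dif_neg h2]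
        have e1 := hyc1 ⟨k.1 - I.1, by have := k.2; omega⟩
        have e2 := hxc0 ⟨j.1, h1⟩
        nlinarith
      · omega
      · simp only [hzdef, hyy'def, if_neg h1, if_neg h2, dif_neg h1, dif_neg h2]
        have := hycm ⟨j.1 - I.1, by have := j.2; omega⟩ ⟨k.1 - I.1, by have := k.2; omega⟩
          (Fin.mk_le_mk.mpr (by omega))
        nlinarith
    refine Set.mem_smul_set.mpr ⟨∑ j : Fin d, (z j / (a + b)) • v j,
      ⟨fun j => z j / (a + b), fun j => div_nonneg (z0 j) hab.le,
       fun j => (div_le_one hab).mpr (zub j),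
       fun j k hjk => (div_le_div_iff_of_pos_right hab).mpr (zmono j k hjk), rfl⟩, ?_⟩
    rw [Finset.smul_sum]
    have e1 : ∀ j : Fin d, (a + b) • (z j / (a + b)) • v j = z j • v j := by
      intro j
      rw [smul_smul, mul_div_cancel₀ _ hab']
    rw [Finset.sum_congr rfl fun j _ => e1 j, ← key]
    congr 2
    · congr 1
      refine Finset.sum_congr rfl fun t _ => ?_
      rw [hx'def]
      simp [Fin.castLE, t.isLt]
    · congr 1
      refine Finset.sum_congr rfl fun t _ => ?_
      rw [hyy'def]
      have ht : ¬ I.1 + t.1 < I.1 := by omega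
      simp only [dif_neg ht, Nat.add_sub_cancel_left, Fin.eta]
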